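/- Let f : (ℕ → Bool) → (ℕ → Bool) be Lipschitz, i.e. for all x, y : ℕ → Bool and all n, if x and y agree below n then f x and f y agree below n. Then f is surjective if and only if f is an isometry, i.e. for all x, y and all n, x and y agree below n if and only if f x and f y agree below n. -/
import Mathlib


/-- A Lipschitz function on Cantor space `ℕ → Bool` is surjective iff it is an isometry. -/
theorem stmt_5 (f : (ℕ → Bool) → (ℕ → Bool))
    (hf : ∀ x y : ℕ → Bool, ∀ n : ℕ, (∀ i < n, x i = y i) → ∀ i < n, f x i = f y i) :
    Function.Surjective f ↔
      ∀ x y : ℕ → Bool, ∀ n : ℕ, (∀ i < n, x i = y i) ↔ (∀ i < n, f x i = f y i) := by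
  classical
  set ext : ∀ n, (Fin n → Bool) → (ℕ → Bool) :=
    fun n s i => if h : i < n then s ⟨i, h⟩ else false with hext
  set res : ∀ n, (ℕ → Bool) → (Fin n → Bool) := fun n x i => x i with hres
  have key : ∀ n x, ∀ i < n, f (ext n (res n x)) i = f x i := by
    intro n x
    apply hf
    intro i hi
    simp [hext, hres, hi]
  set F : ∀ n, (Fin n → Bool) → (Fin n → Bool) := fun n s => res n (f (ext n s)) with hF
  have hFres : ∀ n x, F n (res n x) = res n (f x) := by
    intro n x; funext i
    simpa [hF, hres] using key n x i i.isLt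
  constructor
  · intro hsurj x y n
    refine ⟨hf x y n, ?_⟩
    intro hag
    have hFsurj : Function.Surjective (F n) := by
      intro t
      obtain ⟨x, hx⟩ := hsurj (ext n t)
      refine ⟨res n x, ?_⟩
      rw [hFres, hx]; funext i
      simp [hres, hext, i.isLt]
    have hFinj : Function.Injective (F n) := Finite.injective_iff_surjective.mpr hFsurj
    have hxy : res n x = res n y := hFinj (by
      rw [hFres, hFres]; funext i; exact hag i i.isLt)
    intro i hi
    have := congrFun hxy ⟨i, hi⟩
    simpa [hres] using this
  · intro hiso y
    have hFinj : ∀ n, Function.Injective (F n) := by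
      intro n s t hst
      have h1 : ∀ i < n, f (ext n s) i = f (ext n t) i := by
        intro i hi
        have := congrFun hst ⟨i, hi⟩
        simpa [hF, hres] using this
      have h2 := (hiso (ext n s) (ext n t) n).mpr h1
      funext i
      have := h2 i i.isLt
      simpa [hext] using this
    have hFsurj : ∀ n, Function.Surjective (F n) :=
      fun n => Finite.injective_iff_surjective.mp (hFinj n)
    set C : ℕ → Set (ℕ → Bool) := fun n => {x | ∀ i < n, f x i = y i} with hC
    have hne : ∀ n, (C n).Nonempty := by
      intro n
      obtain ⟨s, hs⟩ := hFsurj n (res n y)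
      refine ⟨ext n s, ?_⟩
      intro i hi
      have := congrFun hs ⟨i, hi⟩
      simpa [hF, hres] using this
    have hcont : Continuous f := by
      apply continuous_pi
      intro i
      have heq : (fun x => f x i)
          = (fun s : Fin (i + 1) → Bool => f (ext (i + 1) s) i) ∘ (res (i + 1)) := by
        funext x
        exact (key (i + 1) x i (Nat.lt_succ_self i)).symm
      rw [heq]
      exact (continuous_of_discreteTopology).comp (continuous_pi fun j => continuous_apply _)
    have hclosed : ∀ n, IsClosed (C n) := by
      intro n
      have hCeq : C n = ⋂ i ∈ Finset.range n, {x | f x i = y i} := by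
        ext x; simp [hC]
      rw [hCeq]
      apply isClosed_biInter
      intro i _
      exact isClosed_eq ((continuous_apply i).comp hcont) continuous_const
    have hcompact : ∀ n, IsCompact (C n) := fun n => (hclosed n).isCompact
    have hdir : Directed (· ⊇ ·) C := by
      intro m n
      exact ⟨max m n, fun x hx i hi => hx i (lt_of_lt_of_le hi (le_max_left _ _)),
             fun x hx i hi => hx i (lt_of_lt_of_le hi (le_max_right _ _))⟩
    obtain ⟨x, hx⟩ :=
      IsCompact.nonempty_iInter_of_directed_nonempty_isCompact_isClosed C hdir hne hcompact hclosed
    refine ⟨x, ?_⟩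
    funext i
    exact (Set.mem_iInter.mp hx (i + 1)) i (Nat.lt_succ_self i)
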